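/- Let γ₁,…,γ_n ∈ ℝ^k (n ≥ 1) be polarized by some ξ ∈ ℝ^k, and let c ∈ ℝ^k. Then for every Schwartz function φ ∈ 𝒮(ℝ^k) the integral ∫_{[0,∞)^n} φ(c + Σ_{j=1}^n s_j γ_j) ds₁⋯ds_n converges absolutely, and the map φ ↦ ∫_{[0,∞)^n} φ(c + Σ_j s_j γ_j) ds is a continuous linear functional on 𝒮(ℝ^k); that is, the convolution δ_c ∗ h_{γ₁} ∗ ⋯ ∗ h_{γ_n} is a well-defined tempered distribution on ℝ^k. -/

import Mathlib

open MeasureTheory Set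
open scoped RealInnerProductSpace

/-- Let `γ₁,…,γ_n ∈ ℝ^k` (`n ≥ 1`) be polarized by some `ξ`
(`⟪γ_j, ξ⟫ > 0` for all `j`) and let `c ∈ ℝ^k`. Then for every Schwartz
function `φ` the integral `∫_{[0,∞)^n} φ(c + Σ_j s_j γ_j) ds` converges
absolutely, and `φ ↦ ∫_{[0,∞)^n} φ(c + Σ_j s_j γ_j) ds` is a continuous
linear functional on `𝒮(ℝ^k)`: the convolution `δ_c ∗ h_{γ₁} ∗ ⋯ ∗ h_{γ_n}`
is a well-defined tempered distribution. -/
theorem stmt_2 (k n : ℕ) (hn : 1 ≤ n)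
    (γ : Fin n → EuclideanSpace ℝ (Fin k)) (ξ : EuclideanSpace ℝ (Fin k))
    (hpol : ∀ j, 0 < ⟪γ j, ξ⟫) (c : EuclideanSpace ℝ (Fin k)) :
    (∀ φ : SchwartzMap (EuclideanSpace ℝ (Fin k)) ℂ,
      IntegrableOn (fun s : Fin n → ℝ => φ (c + ∑ j, s j • γ j))
        (Set.Ici (0 : Fin n → ℝ)) volume) ∧
    (∃ conv : SchwartzMap (EuclideanSpace ℝ (Fin k)) ℂ →L[ℂ] ℂ,
      ∀ φ : SchwartzMap (EuclideanSpace ℝ (Fin k)) ℂ,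
        conv φ = ∫ s in Set.Ici (0 : Fin n → ℝ), φ (c + ∑ j, s j • γ j)) := by
  classical
  set F : (Fin n → ℝ) → EuclideanSpace ℝ (Fin k) :=
    fun s => c + ∑ j, s j • γ j with hF
  have hFcont : Continuous F := by
    apply continuous_const.add
    exact continuous_finset_sum _ fun j _ => (continuous_apply j).smul continuous_const
  -- the minimum of the pairings
  have hne : (Finset.univ : Finset (Fin n)).Nonempty := ⟨⟨0, hn⟩, Finset.mem_univ _⟩
  set ε : ℝ := Finset.univ.inf' hne (fun j => ⟪γ j, ξ⟫) with hεdef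
  have hε : 0 < ε := by
    rw [hεdef, Finset.lt_inf'_iff]
    exact fun j _ => hpol j
  have hεle : ∀ j, ε ≤ ⟪γ j, ξ⟫ := fun j => Finset.inf'_le _ (Finset.mem_univ j)
  set B : ℝ := (ε + ‖ξ‖ + |⟪c, ξ⟫|) / ε with hBdef
  have hB : 0 < B := by positivity
  -- key estimate on the orthant
  have hkey : ∀ s : Fin n → ℝ, s ∈ Set.Ici (0 : Fin n → ℝ) →
      1 + ‖s‖ ≤ B * (1 + ‖F s‖) := by
    intro s hs
    have hs0 : ∀ i, 0 ≤ s i := fun i => hs i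
    have hsum0 : 0 ≤ ∑ j, s j := Finset.sum_nonneg fun j _ => hs0 j
    have hnorm : ‖s‖ ≤ ∑ j, s j := by
      rw [pi_norm_le_iff_of_nonneg hsum0]
      intro i
      rw [Real.norm_of_nonneg (hs0 i)]
      exact Finset.single_le_sum (fun j _ => hs0 j) (Finset.mem_univ i)
    have hinner : ⟪F s, ξ⟫ = ⟪c, ξ⟫ + ∑ j, s j * ⟪γ j, ξ⟫ := by
      simp [hF, inner_add_left, sum_inner, real_inner_smul_left, Finset.mul_sum, mul_assoc]
    have h1 : ε * (∑ j, s j) ≤ ∑ j, s j * ⟪γ j, ξ⟫ := by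
      rw [Finset.mul_sum]
      refine Finset.sum_le_sum fun j _ => ?_
      rw [mul_comm]
      exact mul_le_mul_of_nonneg_left (hεle j) (hs0 j)
    have h2 : ⟪F s, ξ⟫ ≤ ‖F s‖ * ‖ξ‖ := real_inner_le_norm _ _
    have h3 : ε * ‖s‖ ≤ ‖F s‖ * ‖ξ‖ + |⟪c, ξ⟫| := by
      have hc : -|⟪c, ξ⟫| ≤ ⟪c, ξ⟫ := neg_abs_le _
      have := hinner
      nlinarith [mul_le_mul_of_nonneg_left hnorm hε.le]
    have hFs0 : (0:ℝ) ≤ ‖F s‖ := norm_nonneg _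
    have hξ0 : (0:ℝ) ≤ ‖ξ‖ := norm_nonneg _
    rw [hBdef]
    rw [div_mul_eq_mul_div, le_div_iff₀ hε]
    nlinarith [mul_nonneg hξ0 hFs0, mul_nonneg hε.le hFs0,
      mul_nonneg (abs_nonneg (⟪c, ξ⟫)) hFs0, norm_nonneg s]
  -- the pushforward measure
  set μ : Measure (EuclideanSpace ℝ (Fin k)) :=
    Measure.map F (volume.restrict (Set.Ici (0 : Fin n → ℝ))) with hμdef
  have hFae : AEMeasurable F (volume.restrict (Set.Ici (0 : Fin n → ℝ))) :=
    hFcont.measurable.aemeasurable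
  have hgcont : Continuous (fun x : EuclideanSpace ℝ (Fin k) =>
      (1 + ‖x‖) ^ (-((n+1 : ℕ) : ℝ))) := by
    apply Continuous.rpow_const (continuous_const.add continuous_norm)
    intro x
    left
    exact (show (0:ℝ) < 1 + ‖x‖ by positivity).ne'
  -- the comparison function on the orthant is integrable
  have hmaj : Integrable (fun s : Fin n → ℝ =>
      B ^ ((n+1 : ℕ) : ℝ) * (1 + ‖s‖) ^ (-((n+1 : ℕ) : ℝ)))
      (volume.restrict (Set.Ici (0 : Fin n → ℝ))) := by
    refine Integrable.restrict ?_
    refine Integrable.const_mul ?_ _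
    apply integrable_one_add_norm
    rw [Module.finrank_fin_fun]
    push_cast
    linarith
  have hcomp : Integrable ((fun x : EuclideanSpace ℝ (Fin k) =>
      (1 + ‖x‖) ^ (-((n+1 : ℕ) : ℝ))) ∘ F)
      (volume.restrict (Set.Ici (0 : Fin n → ℝ))) := by
    refine hmaj.mono' ((hgcont.comp hFcont).aestronglyMeasurable) ?_
    have hmeas : MeasurableSet (Set.Ici (0 : Fin n → ℝ)) := measurableSet_Ici
    rw [ae_restrict_iff' hmeas]
    filter_upwards with s hs
    have hle := hkey s hs
    have h1 : (0:ℝ) < 1 + ‖s‖ := by positivity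
    have h2 : (0:ℝ) < 1 + ‖F s‖ := by positivity
    have key2 : (1 + ‖s‖) / (1 + ‖F s‖) ≤ B := (div_le_iff₀ h2).2 hle
    have key3 : ((1 + ‖s‖) / (1 + ‖F s‖)) ^ ((n+1 : ℕ) : ℝ) ≤ B ^ ((n+1 : ℕ) : ℝ) :=
      Real.rpow_le_rpow (by positivity) key2 (by positivity)
    rw [Real.div_rpow h1.le h2.le, div_le_iff₀ (Real.rpow_pos_of_pos h2 _)] at key3
    have hpos : (0:ℝ) ≤ (1 + ‖F s‖) ^ (-((n+1 : ℕ) : ℝ)) :=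
      (Real.rpow_pos_of_pos h2 _).le
    simp only [Function.comp_apply]
    rw [Real.norm_of_nonneg hpos]
    rw [Real.rpow_neg h2.le, Real.rpow_neg h1.le, ← div_eq_mul_inv,
      le_div_iff₀ (Real.rpow_pos_of_pos h1 _), inv_mul_le_iff₀ (Real.rpow_pos_of_pos h2 _)]
    rw [mul_comm] at key3
    exact key3
  have hint : Integrable (fun x : EuclideanSpace ℝ (Fin k) =>
      (1 + ‖x‖) ^ (-((n+1 : ℕ) : ℝ))) μ := by
    rw [hμdef, integrable_map_measure hgcont.aestronglyMeasurable hFae]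
    exact hcomp
  haveI hTG : μ.HasTemperateGrowth := ⟨⟨n+1, hint⟩⟩
  constructor
  · intro φ
    have hφint : Integrable (⇑φ) μ := φ.integrable
    rw [hμdef, integrable_map_measure φ.continuous.aestronglyMeasurable hFae] at hφint
    exact hφint
  · refine ⟨SchwartzMap.integralCLM ℂ μ, fun φ => ?_⟩
    rw [SchwartzMap.integralCLM_apply, hμdef,
      integral_map hFae φ.continuous.aestronglyMeasurable]
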